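/- For β > 0 define G_β(q) = q/(1−q) + log(1−q) + (β²/2)(1 − q²) on [0,1). If β > 1, then G_β attains its infimum on [0,1) at q = 1 − 1/β, and inf_{q∈[0,1)} G_β(q) = 2β − 3/2 − log β (so that P(β) = ½ inf G_β = ½(2β − 3/2 − log β)). If 0 < β ≤ 1, then G_β attains its infimum at q = 0, and the infimum equals β²/2. -/

import Mathlib

/-- The replica-symmetric functional G_β(q) = q/(1−q) + log(1−q) + (β²/2)(1 − q²) for the
pure 2-spin spherical model without external field. -/
noncomputable def Gfun (β q : ℝ) : ℝ :=
  q / (1 - q) + Real.log (1 - q) + β ^ 2 / 2 * (1 - q ^ 2)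

lemma lemA (s : ℝ) (h0 : 0 < s) (h1 : s ≤ 1) :
    (1 - s) ^ 2 / 2 ≤ 1 / s - 1 + Real.log s := by
  set H : ℝ → ℝ := fun x => 1 / x - 1 + Real.log x - (1 - x) ^ 2 / 2 with hH
  have hder : ∀ x : ℝ, 0 < x → HasDerivAt H (-(x ^ 2)⁻¹ + x⁻¹ - (x - 1)) x := by
    intro x hx
    have hd1 : HasDerivAt (fun y : ℝ => 1 / y) (-(x ^ 2)⁻¹) x := by
      simpa [one_div] using hasDerivAt_inv (ne_of_gt hx)
    have hd2 := Real.hasDerivAt_log (ne_of_gt hx)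
    have hd3 : HasDerivAt (fun y : ℝ => (1 - y) ^ 2 / 2) (x - 1) x := by
      have h := (((hasDerivAt_id x).const_sub 1).pow 2).div_const 2
      refine h.congr_deriv ?_
      simp
      ring
    rw [hH]
    exact ((hd1.sub_const 1).add hd2).sub hd3
  have hanti : AntitoneOn H (Set.Ioc 0 1) := by
    apply antitoneOn_of_deriv_nonpos (convex_Ioc 0 1)
    · intro x hx
      exact (hder x hx.1).differentiableAt.continuousAt.continuousWithinAt
    · rw [interior_Ioc]
      intro x hx
      exact (hder x hx.1).differentiableAt.differentiableWithinAt
    · rw [interior_Ioc]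
      intro x hx
      rw [(hder x hx.1).deriv]
      have hx0 : x ≠ 0 := ne_of_gt hx.1
      have e : -(x ^ 2)⁻¹ + x⁻¹ - (x - 1) = -((1 - x) ^ 2 * (1 + x)) / x ^ 2 := by
        field_simp
        ring
      rw [e]
      apply div_nonpos_of_nonpos_of_nonneg
      · nlinarith [sq_nonneg (1 - x), hx.1.le, hx.2.le]
      · positivity
  have hmem : s ∈ Set.Ioc (0 : ℝ) 1 := ⟨h0, h1⟩
  have hone : (1 : ℝ) ∈ Set.Ioc (0 : ℝ) 1 := by norm_num
  have := hanti hmem hone h1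
  simp only [hH, Real.log_one] at this
  norm_num at this
  rw [one_div]
  linarith

lemma lemB (s : ℝ) (h1 : 1 ≤ s) : 2 * s - 3 / 2 - s ^ 2 / 2 ≤ Real.log s := by
  set F : ℝ → ℝ := fun x => Real.log x - 2 * x + 3 / 2 + x ^ 2 / 2 with hF
  have hder : ∀ x : ℝ, 0 < x → HasDerivAt F (x⁻¹ - 2 + x) x := by
    intro x hx
    have hd1 := Real.hasDerivAt_log (ne_of_gt hx)
    have hd2 : HasDerivAt (fun y : ℝ => 2 * y) 2 x := by
      simpa using (hasDerivAt_id x).const_mul 2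
    have hd3 : HasDerivAt (fun y : ℝ => y ^ 2 / 2) x x := by
      have h := ((hasDerivAt_id x).pow 2).div_const 2
      refine h.congr_deriv ?_
      simp
    exact ((hd1.sub hd2).add_const (3 / 2 : ℝ)).add hd3
  have hmono : MonotoneOn F (Set.Ici 1) := by
    apply monotoneOn_of_deriv_nonneg (convex_Ici 1)
    · intro x hx
      exact (hder x (lt_of_lt_of_le one_pos hx)).differentiableAt.continuousAt.continuousWithinAt
    · rw [interior_Ici]
      intro x hx
      exact (hder x (lt_trans one_pos hx)).differentiableAt.differentiableWithinAt
    · rw [interior_Ici]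
      intro x hx
      rw [(hder x (lt_trans one_pos hx)).deriv]
      have hx0 : (0 : ℝ) < x := lt_trans one_pos hx
      have e : x⁻¹ - 2 + x = (x - 1) ^ 2 / x := by
        field_simp
        ring
      rw [e]
      positivity
  have := hmono (Set.self_mem_Ici) h1 h1
  simp only [hF, Real.log_one] at this
  norm_num at this
  linarith

lemma keylem (β s : ℝ) (hβ : 1 ≤ β) (hs : 0 < s) (hsβ : s ≤ β) :
    0 ≤ β * (1 / s + s - 2) + Real.log s - s ^ 2 / 2 + 1 / 2 := by
  have hfac : (0 : ℝ) ≤ (s - 1) ^ 2 / s := by positivity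
  have hb : 1 / s + s - 2 = (s - 1) ^ 2 / s := by
    field_simp
    ring
  rcases le_or_gt s 1 with h | h
  · have hA := lemA s hs h
    have h2 : (1 : ℝ) * ((s - 1) ^ 2 / s) ≤ β * ((s - 1) ^ 2 / s) :=
      mul_le_mul_of_nonneg_right hβ hfac
    have he : (1 : ℝ) * ((s - 1) ^ 2 / s) = 1 / s + s - 2 := by
      field_simp
      ring
    rw [he] at h2
    rw [hb]
    nlinarith [hA, h2]
  · have hB := lemB s h.le
    have h2 : s * ((s - 1) ^ 2 / s) ≤ β * ((s - 1) ^ 2 / s) :=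
      mul_le_mul_of_nonneg_right hsβ hfac
    have he : s * ((s - 1) ^ 2 / s) = (s - 1) ^ 2 := by
      field_simp
    rw [he] at h2
    rw [hb]
    nlinarith [h2, hB]

theorem stmt14 (β : ℝ) (hβ : 0 < β) :
    (1 < β →
      (∀ q ∈ Set.Ico (0 : ℝ) 1, Gfun β (1 - 1 / β) ≤ Gfun β q) ∧
      Gfun β (1 - 1 / β) = 2 * β - 3 / 2 - Real.log β) ∧
    (β ≤ 1 →
      (∀ q ∈ Set.Ico (0 : ℝ) 1, Gfun β 0 ≤ Gfun β q) ∧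
      Gfun β 0 = β ^ 2 / 2) := by
  have hβ' : β ≠ 0 := ne_of_gt hβ
  constructor
  · intro h1β
    have hval : Gfun β (1 - 1 / β) = 2 * β - 3 / 2 - Real.log β := by
      unfold Gfun
      have h1 : (1 : ℝ) - (1 - 1 / β) = 1 / β := by ring
      rw [h1, one_div, Real.log_inv]
      field_simp
      ring
    refine ⟨?_, hval⟩
    intro q hq
    rw [hval]
    obtain ⟨hq0, hq1⟩ := hq
    have ht : 0 < 1 - q := by linarith
    set s := β * (1 - q) with hs
    have hs0 : 0 < s := mul_pos hβ ht
    have hsβ : s ≤ β := by nlinarith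
    have hk := keylem β s h1β.le hs0 hsβ
    have hlog : Real.log s = Real.log β + Real.log (1 - q) :=
      Real.log_mul hβ' (ne_of_gt ht)
    rw [hlog] at hk
    have hid : β * (1 / s + s - 2) + (Real.log β + Real.log (1 - q)) - s ^ 2 / 2 + 1 / 2
        = Gfun β q - (2 * β - 3 / 2 - Real.log β) := by
      unfold Gfun
      rw [hs]
      field_simp
      ring
    rw [hid] at hk
    linarith
  · intro hβ1
    have hval : Gfun β 0 = β ^ 2 / 2 := by simp [Gfun]
    refine ⟨?_, hval⟩
    rintro q ⟨hq0, hq1⟩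
    rw [hval]
    have ht : 0 < 1 - q := by linarith
    have hA := lemA (1 - q) ht (by linarith)
    unfold Gfun
    have h2 : q / (1 - q) - 1 / (1 - q) = -1 := by
      field_simp
      ring
    have hb1 : β ^ 2 ≤ 1 := by nlinarith
    have hb2 : β ^ 2 * q ^ 2 ≤ q ^ 2 := by nlinarith [sq_nonneg q, hb1]
    nlinarith [hA, h2, hb2]
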